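/- Let L > 0 and let k : ℝ × ℝ → ℝ be continuous on [0,L] × [0,L]. Then the map Π defined by (Π f)(x) = f(x) − ∫ₓᴸ k(x,y) f(y) dy is a bounded linear operator from L²(0,L) to L²(0,L), it is bijective, and its inverse is also a bounded linear operator. -/

import Mathlib

open MeasureTheory

namespace VolterraAux

open Set Filter
open scoped ENNReal NNReal

noncomputable abbrev vμ (L : ℝ) : Measure ℝ := volume.restrict (Set.Ioo 0 L)

instance (L : ℝ) : IsFiniteMeasure (vμ L) := by
  constructor
  rw [Measure.restrict_apply_univ, Real.volume_Ioo]
  exact ENNReal.ofReal_lt_top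

lemma vμ_univ (L : ℝ) : vμ L Set.univ = ENNReal.ofReal L := by
  rw [Measure.restrict_apply_univ, Real.volume_Ioo, sub_zero]

lemma vμ_ne_zero {L : ℝ} (hL : 0 < L) : vμ L ≠ 0 := by
  intro h0
  have h := vμ_univ L
  rw [h0] at h
  simp only [Measure.coe_zero, Pi.zero_apply] at h
  rw [eq_comm, ENNReal.ofReal_eq_zero] at h
  linarith

/-- The Volterra integral part. -/
noncomputable def Vint (L : ℝ) (K : ℝ → ℝ → ℝ) (f : ℝ → ℝ) (x : ℝ) : ℝ :=
  ∫ y in Set.Ioo x L, K x y * f y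

lemma Vint_congr (L : ℝ) (K : ℝ → ℝ → ℝ) {f g : ℝ → ℝ} (h : f =ᵐ[vμ L] g)
    {x : ℝ} (hx : 0 ≤ x) : Vint L K f x = Vint L K g x := by
  have h' : f =ᵐ[volume.restrict (Set.Ioo x L)] g :=
    ae_restrict_of_ae_restrict_of_subset (Set.Ioo_subset_Ioo hx le_rfl) h
  exact integral_congr_ae (h'.mono fun y hy => by dsimp only; rw [hy])

lemma Vint_meas (L : ℝ) {K : ℝ → ℝ → ℝ} (hK : Continuous (Function.uncurry K))
    {f : ℝ → ℝ} (hf : AEStronglyMeasurable f (vμ L)) :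
    AEStronglyMeasurable (Vint L K f) (vμ L) := by
  set f' := hf.mk f with hf'def
  have hsm : StronglyMeasurable f' := hf.stronglyMeasurable_mk
  have hG : StronglyMeasurable (Function.uncurry fun x y =>
      Set.indicator (Set.Ioo x L) (fun z => K x z * f' z) y) := by
    have hset : MeasurableSet {q : ℝ × ℝ | q.1 < q.2 ∧ q.2 < L} :=
      (measurableSet_lt measurable_fst measurable_snd).inter
        (measurableSet_lt measurable_snd measurable_const)
    have h1 : StronglyMeasurable fun q : ℝ × ℝ => K q.1 q.2 * f' q.2 :=
      hK.stronglyMeasurable.mul (hsm.comp_measurable measurable_snd)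
    have heq : (Function.uncurry fun x y =>
        Set.indicator (Set.Ioo x L) (fun z => K x z * f' z) y)
        = Set.indicator {q : ℝ × ℝ | q.1 < q.2 ∧ q.2 < L}
            (fun q => K q.1 q.2 * f' q.2) := by
      funext q
      simp [Function.uncurry, Set.indicator_apply, Set.mem_Ioo, Set.mem_setOf_eq]
    rw [heq]
    exact h1.indicator hset
  have h2 : StronglyMeasurable (Vint L K f') := by
    have h4 : Vint L K f' = fun x => ∫ y,
        Set.indicator (Set.Ioo x L) (fun z => K x z * f' z) y ∂(volume : Measure ℝ) := by
      funext x
      rw [Vint, ← integral_indicator measurableSet_Ioo]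
    rw [h4]
    exact hG.integral_prod_right
  refine h2.aestronglyMeasurable.congr ?_
  filter_upwards [ae_restrict_mem measurableSet_Ioo] with x hx
  exact (Vint_congr L K hf.ae_eq_mk hx.1.le).symm

lemma Vint_integrable (L : ℝ) {K : ℝ → ℝ → ℝ} (hK : Continuous (Function.uncurry K))
    {M : ℝ} (hM : ∀ x y, |K x y| ≤ M) {f : ℝ → ℝ} (hf : MemLp f 2 (vμ L))
    {x : ℝ} (hx : 0 ≤ x) :
    IntegrableOn (fun y => K x y * f y) (Set.Ioo x L) volume := by
  have h1 : Integrable f (vμ L) := hf.integrable one_le_two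
  have h2 : IntegrableOn f (Set.Ioo x L) volume :=
    h1.mono_measure (Measure.restrict_mono (Set.Ioo_subset_Ioo hx le_rfl) le_rfl)
  exact h2.bdd_mul ((hK.comp (Continuous.prodMk_right x)).aestronglyMeasurable)
    (c := M) (Eventually.of_forall fun y => by simpa [Real.norm_eq_abs] using hM x y)

lemma abs_integrable (L : ℝ) {f : ℝ → ℝ} (hf : MemLp f 2 (vμ L))
    {x : ℝ} (hx : 0 ≤ x) :
    IntegrableOn (fun y => |f y|) (Set.Ioo x L) volume := by
  have h1 : Integrable f (vμ L) := hf.integrable one_le_two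
  have h2 : IntegrableOn f (Set.Ioo x L) volume :=
    h1.mono_measure (Measure.restrict_mono (Set.Ioo_subset_Ioo hx le_rfl) le_rfl)
  exact (by simpa [Real.norm_eq_abs] using h2.norm :
    Integrable (fun y => |f y|) (volume.restrict (Set.Ioo x L)))

lemma Vint_abs_le (L : ℝ) {K : ℝ → ℝ → ℝ} (hK : Continuous (Function.uncurry K))
    {M : ℝ} (hM : ∀ x y, |K x y| ≤ M) {f : ℝ → ℝ} (hf : MemLp f 2 (vμ L))
    {x : ℝ} (hx : 0 ≤ x) :
    |Vint L K f x| ≤ M * ∫ y in Set.Ioo x L, |f y| := by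
  have hi := Vint_integrable L hK hM hf hx
  have h2 := abs_integrable L hf hx
  rw [Vint, ← Real.norm_eq_abs]
  calc ‖∫ y in Set.Ioo x L, K x y * f y‖ ≤ ∫ y in Set.Ioo x L, ‖K x y * f y‖ :=
        norm_integral_le_integral_norm _
    _ ≤ ∫ y in Set.Ioo x L, M * |f y| := by
        refine integral_mono hi.norm (h2.const_mul M) fun y => ?_
        rw [Real.norm_eq_abs, abs_mul]
        exact mul_le_mul_of_nonneg_right (hM x y) (abs_nonneg _)
    _ = M * ∫ y in Set.Ioo x L, |f y| := integral_const_mul M _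

/-- Cauchy–Schwarz: the L¹ norm is controlled by the L² norm. -/
lemma cs_bound (L : ℝ) (hL : 0 < L) (f : Lp ℝ 2 (vμ L)) :
    ∫ y, |f y| ∂(vμ L) ≤ Real.sqrt L * ‖f‖ := by
  have hmem : MemLp (fun y => |f y|) 2 (vμ L) := by
    simpa [Real.norm_eq_abs] using (Lp.memLp f).norm
  have hone : MemLp (fun _ : ℝ => (1 : ℝ)) 2 (vμ L) := memLp_const 1
  set G := hmem.toLp _ with hGdef
  set O := hone.toLp _ with hOdef
  have key : ∫ y, |f y| ∂(vμ L) = inner (𝕜 := ℝ) G O := by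
    rw [L2.inner_def]
    refine integral_congr_ae ?_
    filter_upwards [hmem.coeFn_toLp, hone.coeFn_toLp] with y h1 h2
    simp only [hGdef, hOdef, h1, h2]
    simp [RCLike.inner_apply]
  have hGnorm : ‖G‖ = ‖f‖ := by
    rw [hGdef, Lp.norm_def, eLpNorm_congr_ae hmem.coeFn_toLp,
      show (fun y => |f y|) = fun y => ‖f y‖ from funext fun y => (Real.norm_eq_abs _).symm,
      eLpNorm_norm, ← Lp.norm_def]
  have hOnorm : ‖O‖ = Real.sqrt L := by
    rw [hOdef, Lp.norm_def, eLpNorm_congr_ae hone.coeFn_toLp,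
      eLpNorm_const (1 : ℝ) two_ne_zero (vμ_ne_zero hL), vμ_univ]
    simp only [enorm_one, one_mul]
    rw [← ENNReal.toReal_rpow, ENNReal.toReal_ofReal hL.le]
    rw [Real.sqrt_eq_rpow]
    norm_num
  calc ∫ y, |f y| ∂(vμ L) = inner (𝕜 := ℝ) G O := key
    _ ≤ ‖G‖ * ‖O‖ := real_inner_le_norm G O
    _ = Real.sqrt L * ‖f‖ := by rw [hGnorm, hOnorm, mul_comm]

lemma abs_setIntegral_le (L : ℝ) (hL : 0 < L) (f : Lp ℝ 2 (vμ L)) {x : ℝ} (hx : 0 ≤ x) :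
    ∫ y in Set.Ioo x L, |f y| ≤ Real.sqrt L * ‖f‖ := by
  have h1 : IntegrableOn (fun y => |f y|) (Set.Ioo 0 L) volume :=
    abs_integrable L (Lp.memLp f) le_rfl
  have h2 : ∫ y in Set.Ioo x L, |f y| ≤ ∫ y in Set.Ioo 0 L, |f y| := by
    refine setIntegral_mono_set h1 ?_ (HasSubset.Subset.eventuallyLE (Set.Ioo_subset_Ioo hx le_rfl))
    filter_upwards with y using abs_nonneg _
  exact h2.trans (cs_bound L hL f)

lemma poly_integral (L : ℝ) (n : ℕ) {x : ℝ} (hx : x ≤ L) :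
    ∫ y in Set.Ioo x L, (L - y) ^ n = (L - x) ^ (n + 1) / (n + 1) := by
  rw [← integral_Ioc_eq_integral_Ioo, ← intervalIntegral.integral_of_le hx,
    intervalIntegral.integral_comp_sub_left (fun y => y ^ n) L, sub_self,
    integral_pow]
  simp

lemma mono_bound (L : ℝ) {f : ℝ → ℝ} {x : ℝ} (hx : x ∈ Set.Ioo (0:ℝ) L)
    (hfi : IntegrableOn (fun y => |f y|) (Set.Ioo x L) volume)
    {C : ℝ} (hC : 0 ≤ C) (n : ℕ) (hb : ∀ᵐ y ∂(vμ L), |f y| ≤ C * (L - y) ^ n) :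
    ∫ y in Set.Ioo x L, |f y| ≤ C * ((L - x) ^ (n + 1) / (n + 1)) := by
  have hsub : Set.Ioo x L ⊆ Set.Ioo 0 L := Set.Ioo_subset_Ioo hx.1.le le_rfl
  have hb' : ∀ᵐ y ∂(volume.restrict (Set.Ioo x L)), |f y| ≤ C * (L - y) ^ n :=
    ae_restrict_of_ae_restrict_of_subset hsub hb
  have hpoly : IntegrableOn (fun y => C * (L - y) ^ n) (Set.Ioo x L) volume :=
    ((continuous_const.mul ((continuous_const.sub continuous_id).pow n)).integrableOn_Icc).mono_set
      Set.Ioo_subset_Icc_self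
  calc ∫ y in Set.Ioo x L, |f y| ≤ ∫ y in Set.Ioo x L, C * (L - y) ^ n :=
        integral_mono_ae hfi hpoly hb'
    _ = C * ∫ y in Set.Ioo x L, (L - y) ^ n := integral_const_mul C _
    _ = C * ((L - x) ^ (n + 1) / (n + 1)) := by rw [poly_integral L n hx.2.le]

lemma Vop_memℒp (L : ℝ) (hL : 0 < L) {K : ℝ → ℝ → ℝ}
    (hK : Continuous (Function.uncurry K)) {M : ℝ} (hM : ∀ x y, |K x y| ≤ M)
    (f : Lp ℝ 2 (vμ L)) : MemLp (Vint L K ⇑f) 2 (vμ L) := by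
  have hM0 : 0 ≤ M := (abs_nonneg _).trans (hM 0 0)
  refine MemLp.of_bound (Vint_meas L hK (Lp.aestronglyMeasurable f))
    (M * (Real.sqrt L * ‖f‖)) ?_
  filter_upwards [ae_restrict_mem measurableSet_Ioo] with x hx
  rw [Real.norm_eq_abs]
  calc |Vint L K (⇑f) x| ≤ M * ∫ y in Set.Ioo x L, |f y| :=
        Vint_abs_le L hK hM (Lp.memLp f) hx.1.le
    _ ≤ M * (Real.sqrt L * ‖f‖) :=
        mul_le_mul_of_nonneg_left (abs_setIntegral_le L hL f hx.1.le) hM0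

/-- Norm of an `Lp` element from an a.e. bound. -/
lemma norm_le_sqrt_mul (L : ℝ) (hL : 0 < L) (g : Lp ℝ 2 (vμ L)) {C : ℝ} (hC : 0 ≤ C)
    (h : ∀ᵐ x ∂(vμ L), |g x| ≤ C) : ‖g‖ ≤ Real.sqrt L * C := by
  have h1 := Lp.norm_le_of_ae_bound (f := g) hC (by simpa [Real.norm_eq_abs] using h)
  refine h1.trans ?_
  refine mul_le_mul_of_nonneg_right (le_of_eq ?_) hC
  have h2 : measureUnivNNReal (vμ L) = Real.toNNReal L := by
    simp [measureUnivNNReal, vμ_univ, ENNReal.ofReal]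
  rw [h2]
  have h3 : ((Real.toNNReal L : ℝ≥0) : ℝ) = L := Real.coe_toNNReal L hL.le
  rw [h3]
  have h4 : ((2 : ℝ≥0∞).toReal)⁻¹ = (2 : ℝ)⁻¹ := by norm_num
  rw [h4, Real.sqrt_eq_rpow, one_div]

/-- The Volterra integral operator as a bounded operator on `L²(0,L)`. -/
noncomputable def Vop (L : ℝ) (hL : 0 < L) (K : ℝ → ℝ → ℝ)
    (hK : Continuous (Function.uncurry K)) (M : ℝ) (hM : ∀ x y, |K x y| ≤ M) :
    Lp ℝ 2 (vμ L) →L[ℝ] Lp ℝ 2 (vμ L) :=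
  LinearMap.mkContinuous
    { toFun := fun f => (Vop_memℒp L hL hK hM f).toLp (Vint L K ⇑f)
      map_add' := fun f g => by
        rw [← MemLp.toLp_add (Vop_memℒp L hL hK hM f) (Vop_memℒp L hL hK hM g)]
        apply MemLp.toLp_congr
        filter_upwards [ae_restrict_mem measurableSet_Ioo] with x hx
        have h1 : Vint L K (⇑(f + g)) x = Vint L K (⇑f + ⇑g) x :=
          Vint_congr L K (Lp.coeFn_add f g) hx.1.le
        have h2 : Vint L K (⇑f + ⇑g) x = Vint L K (⇑f) x + Vint L K (⇑g) x := by
          rw [Vint, Vint, Vint, ← integral_add (Vint_integrable L hK hM (Lp.memLp f) hx.1.le)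
            (Vint_integrable L hK hM (Lp.memLp g) hx.1.le)]
          refine integral_congr_ae (Eventually.of_forall fun y => ?_)
          simp [mul_add]
        rw [h1, h2]
        rfl
      map_smul' := fun c f => by
        simp only [RingHom.id_apply]
        rw [← MemLp.toLp_const_smul c (Vop_memℒp L hL hK hM f)]
        apply MemLp.toLp_congr
        filter_upwards [ae_restrict_mem measurableSet_Ioo] with x hx
        have h1 : Vint L K (⇑(c • f)) x = Vint L K (c • ⇑f) x :=
          Vint_congr L K (Lp.coeFn_smul c f) hx.1.le
        have h2 : Vint L K (c • ⇑f) x = c * Vint L K (⇑f) x := by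
          rw [Vint, Vint, ← integral_const_mul]
          refine integral_congr_ae (Eventually.of_forall fun y => ?_)
          simp [smul_eq_mul]
          ring
        rw [h1, h2]
        rfl }
    (Real.sqrt L * (M * (Real.sqrt L * 1)))
    (by
      intro f
      simp only [LinearMap.coe_mk, AddHom.coe_mk]
      have hM0 : 0 ≤ M := (abs_nonneg _).trans (hM 0 0)
      have hb : ∀ᵐ x ∂(vμ L),
          |((Vop_memℒp L hL hK hM f).toLp (Vint L K ⇑f) : ℝ → ℝ) x|
            ≤ M * (Real.sqrt L * ‖f‖) := by
        filter_upwards [(Vop_memℒp L hL hK hM f).coeFn_toLp,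
          ae_restrict_mem measurableSet_Ioo] with x h1 hx
        rw [h1]
        calc |Vint L K (⇑f) x| ≤ M * ∫ y in Set.Ioo x L, |f y| :=
              Vint_abs_le L hK hM (Lp.memLp f) hx.1.le
          _ ≤ M * (Real.sqrt L * ‖f‖) :=
              mul_le_mul_of_nonneg_left (abs_setIntegral_le L hL f hx.1.le) hM0
      have := norm_le_sqrt_mul L hL _ (by positivity) hb
      calc ‖(Vop_memℒp L hL hK hM f).toLp (Vint L K ⇑f)‖
          ≤ Real.sqrt L * (M * (Real.sqrt L * ‖f‖)) := this
        _ = Real.sqrt L * (M * (Real.sqrt L * 1)) * ‖f‖ := by ring)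

lemma Vop_coeFn (L : ℝ) (hL : 0 < L) (K : ℝ → ℝ → ℝ)
    (hK : Continuous (Function.uncurry K)) (M : ℝ) (hM : ∀ x y, |K x y| ≤ M)
    (f : Lp ℝ 2 (vμ L)) :
    ⇑(Vop L hL K hK M hM f) =ᵐ[vμ L] Vint L K ⇑f := by
  simp only [Vop, LinearMap.mkContinuous_apply, LinearMap.coe_mk, AddHom.coe_mk]
  exact MemLp.coeFn_toLp _

/-- Iterated pointwise bound on powers of the Volterra operator. -/
lemma Vop_pow_bound (L : ℝ) (hL : 0 < L) (K : ℝ → ℝ → ℝ)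
    (hK : Continuous (Function.uncurry K)) (M : ℝ) (hM : ∀ x y, |K x y| ≤ M)
    (n : ℕ) (f : Lp ℝ 2 (vμ L)) :
    ∀ᵐ x ∂(vμ L), |((Vop L hL K hK M hM ^ (n + 1)) f : ℝ → ℝ) x| ≤
      (M * (Real.sqrt L * ‖f‖) * M ^ n / n.factorial) * (L - x) ^ n := by
  have hM0 : 0 ≤ M := (abs_nonneg _).trans (hM 0 0)
  induction n with
  | zero =>
    have h1 : (Vop L hL K hK M hM ^ 1) f = Vop L hL K hK M hM f := by rw [pow_one]
    rw [h1]
    filter_upwards [Vop_coeFn L hL K hK M hM f, ae_restrict_mem measurableSet_Ioo]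
      with x hx hmem
    rw [hx]
    simp only [pow_zero, Nat.factorial_zero, Nat.cast_one, mul_one, div_one]
    calc |Vint L K (⇑f) x| ≤ M * ∫ y in Set.Ioo x L, |f y| :=
          Vint_abs_le L hK hM (Lp.memLp f) hmem.1.le
      _ ≤ M * (Real.sqrt L * ‖f‖) :=
          mul_le_mul_of_nonneg_left (abs_setIntegral_le L hL f hmem.1.le) hM0
  | succ n ih =>
    set T := Vop L hL K hK M hM with hT
    set g := (T ^ (n + 1)) f with hg
    have hC0 : 0 ≤ M * (Real.sqrt L * ‖f‖) * M ^ n / n.factorial := by positivity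
    have hpow : (T ^ (n + 2)) f = T g := by
      rw [hg, pow_succ']
      rfl
    rw [hpow]
    filter_upwards [Vop_coeFn L hL K hK M hM g, ae_restrict_mem measurableSet_Ioo]
      with x hx hmem
    rw [hx]
    have step1 : |Vint L K (⇑g) x| ≤ M * ∫ y in Set.Ioo x L, |g y| :=
      Vint_abs_le L hK hM (Lp.memLp g) hmem.1.le
    have step2 : ∫ y in Set.Ioo x L, |g y| ≤
        (M * (Real.sqrt L * ‖f‖) * M ^ n / n.factorial) * ((L - x) ^ (n + 1) / (n + 1)) :=
      mono_bound L hmem (abs_integrable L (Lp.memLp g) hmem.1.le) hC0 n ih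
    calc |Vint L K (⇑g) x|
        ≤ M * ((M * (Real.sqrt L * ‖f‖) * M ^ n / n.factorial) *
            ((L - x) ^ (n + 1) / (n + 1))) :=
          step1.trans (mul_le_mul_of_nonneg_left step2 hM0)
      _ = (M * (Real.sqrt L * ‖f‖) * M ^ (n + 1) / (n + 1).factorial) * (L - x) ^ (n + 1) := by
          rw [Nat.factorial_succ]
          have hnf : (0:ℝ) < n.factorial := by positivity
          have hn1 : (0:ℝ) < (n:ℝ) + 1 := by positivity
          push_cast
          field_simp
          ring

/-- Norm bound on powers of the Volterra operator. -/
lemma Vop_pow_norm (L : ℝ) (hL : 0 < L) (K : ℝ → ℝ → ℝ)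
    (hK : Continuous (Function.uncurry K)) (M : ℝ) (hM : ∀ x y, |K x y| ≤ M)
    (n : ℕ) :
    ‖Vop L hL K hK M hM ^ (n + 1)‖ ≤ (M * L) * ((M * L) ^ n / n.factorial) := by
  have hM0 : 0 ≤ M := (abs_nonneg _).trans (hM 0 0)
  refine ContinuousLinearMap.opNorm_le_bound _ (by positivity) fun f => ?_
  have hCn : (0:ℝ) ≤ M * (Real.sqrt L * ‖f‖) * M ^ n / n.factorial := by positivity
  have hb : ∀ᵐ x ∂(vμ L), |((Vop L hL K hK M hM ^ (n + 1)) f : ℝ → ℝ) x| ≤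
      (M * (Real.sqrt L * ‖f‖) * M ^ n / n.factorial) * L ^ n := by
    filter_upwards [Vop_pow_bound L hL K hK M hM n f, ae_restrict_mem measurableSet_Ioo]
      with x h1 hx
    refine h1.trans (mul_le_mul_of_nonneg_left ?_ hCn)
    exact pow_le_pow_left₀ (by linarith [hx.2] : (0:ℝ) ≤ L - x) (by linarith [hx.1]) n
  have h2 := norm_le_sqrt_mul L hL _ (by positivity) hb
  refine h2.trans (le_of_eq ?_)
  have hs : Real.sqrt L * Real.sqrt L = L := Real.mul_self_sqrt hL.le
  calc Real.sqrt L * (M * (Real.sqrt L * ‖f‖) * M ^ n / n.factorial * L ^ n)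
      = (Real.sqrt L * Real.sqrt L) * (M * ‖f‖ * M ^ n / n.factorial * L ^ n) := by ring
    _ = L * (M * ‖f‖ * M ^ n / n.factorial * L ^ n) := by rw [hs]
    _ = M * L * ((M * L) ^ n / n.factorial) * ‖f‖ := by rw [mul_pow]; ring

lemma Vint_eq_interval (L : ℝ) (hL : 0 < L) (k K : ℝ → ℝ → ℝ)
    (hkK : ∀ x ∈ Set.Icc (0:ℝ) L, ∀ y ∈ Set.Icc (0:ℝ) L, K x y = k x y)
    (f : ℝ → ℝ) {x : ℝ} (hx : x ∈ Set.Ioo (0:ℝ) L) :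
    Vint L K f x = ∫ y in x..L, k x y * f y := by
  rw [Vint, intervalIntegral.integral_of_le hx.2.le, integral_Ioc_eq_integral_Ioo]
  refine setIntegral_congr_fun measurableSet_Ioo fun y hy => ?_
  rw [hkK x ⟨hx.1.le, hx.2.le⟩ y ⟨(hx.1.trans hy.1).le, hy.2.le⟩]

end VolterraAux

open VolterraAux Filter

/-- The Volterra transformation of the second kind `Π f (x) = f(x) - ∫ₓᴸ k(x,y) f(y) dy`
with continuous upper-triangular kernel `k` is a bounded linear operator on `L²(0,L)`, it is
bijective, and its inverse is also bounded; i.e. it induces a continuous linear equivalence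
of `L²(0,L)` with itself. -/
theorem volterra_transformation_invertible
    (L : ℝ) (hL : 0 < L) (k : ℝ → ℝ → ℝ)
    (hk : ContinuousOn (Function.uncurry k) (Set.Icc (0:ℝ) L ×ˢ Set.Icc (0:ℝ) L)) :
    ∃ Pi : Lp ℝ 2 (volume.restrict (Set.Ioo (0:ℝ) L))
        ≃L[ℝ] Lp ℝ 2 (volume.restrict (Set.Ioo (0:ℝ) L)),
      ∀ f : Lp ℝ 2 (volume.restrict (Set.Ioo (0:ℝ) L)),
        (Pi f : ℝ → ℝ)
          =ᵐ[volume.restrict (Set.Ioo (0:ℝ) L)]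
            fun x => f x - ∫ y in x..L, k x y * f y := by
  classical
  -- extend `k` to a globally continuous bounded kernel `K` via projection onto `[0,L]`
  set pr : ℝ → ℝ := fun t => max 0 (min L t) with hpr_def
  have hpr_cont : Continuous pr := continuous_const.max (continuous_const.min continuous_id)
  have hpr_mem : ∀ t, pr t ∈ Set.Icc (0:ℝ) L := fun t =>
    ⟨le_max_left _ _, max_le hL.le (min_le_left _ _)⟩
  have hpr_eq : ∀ t ∈ Set.Icc (0:ℝ) L, pr t = t := fun t ht => by
    simp only [hpr_def]
    rw [min_eq_right ht.2, max_eq_right ht.1]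
  set K : ℝ → ℝ → ℝ := fun x y => k (pr x) (pr y) with hK_def
  have hKc : Continuous (Function.uncurry K) := by
    have heq : Function.uncurry K =
        Function.uncurry k ∘ fun p : ℝ × ℝ => (pr p.1, pr p.2) := rfl
    rw [heq]
    exact hk.comp_continuous
      ((hpr_cont.comp continuous_fst).prodMk (hpr_cont.comp continuous_snd))
      fun p => Set.mk_mem_prod (hpr_mem _) (hpr_mem _)
  obtain ⟨M0, hM0⟩ := (isCompact_Icc.prod isCompact_Icc).exists_bound_of_continuousOn hk
  set M : ℝ := max M0 0 with hM_def
  have hM : ∀ x y, |K x y| ≤ M := fun x y => by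
    have h := hM0 (pr x, pr y) (Set.mk_mem_prod (hpr_mem x) (hpr_mem y))
    rw [Real.norm_eq_abs] at h
    exact h.trans (le_max_left _ _)
  have hkK : ∀ x ∈ Set.Icc (0:ℝ) L, ∀ y ∈ Set.Icc (0:ℝ) L, K x y = k x y := by
    intro x hx y hy
    simp only [hK_def]
    rw [hpr_eq x hx, hpr_eq y hy]
  set T := Vop L hL K hKc M hM with hT_def
  -- find a power of `T` with norm `< 1`
  obtain ⟨n, hn⟩ : ∃ n : ℕ, ‖T ^ (n + 1)‖ < 1 := by
    have htend : Tendsto (fun n : ℕ => (M * L) * ((M * L) ^ n / n.factorial))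
        atTop (nhds 0) := by
      have h := FloorSemiring.tendsto_pow_div_factorial_atTop (M * L) (K := ℝ)
      simpa using h.const_mul (M * L)
    have hev : ∀ᶠ n : ℕ in atTop, (M * L) * ((M * L) ^ n / n.factorial) < 1 :=
      htend.eventually (gt_mem_nhds one_pos)
    obtain ⟨n, hn⟩ := hev.exists
    exact ⟨n, lt_of_le_of_lt (Vop_pow_norm L hL K hKc M hM n) hn⟩
  set u := Units.oneSub (T ^ (n + 1)) hn with hu_def
  have hval : ((u : Lp ℝ 2 (vμ L) →L[ℝ] Lp ℝ 2 (vμ L))) = 1 - T ^ (n + 1) := rfl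
  set S := ∑ i ∈ Finset.range (n + 1), T ^ i with hS_def
  have hS1 : (1 - T) * S = 1 - T ^ (n + 1) := by
    have h := mul_geom_sum T (n + 1)
    have h2 : T * S - S = T ^ (n + 1) - 1 := by
      rwa [sub_mul, one_mul] at h
    calc (1 - T) * S = -(T * S - S) := by rw [sub_mul, one_mul, neg_sub]
      _ = -(T ^ (n + 1) - 1) := by rw [h2]
      _ = 1 - T ^ (n + 1) := neg_sub _ _
  have hS2 : S * (1 - T) = 1 - T ^ (n + 1) := by
    have h := geom_sum_mul T (n + 1)
    have h2 : S * T - S = T ^ (n + 1) - 1 := by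
      rwa [mul_sub, mul_one] at h
    calc S * (1 - T) = -(S * T - S) := by rw [mul_sub, mul_one, neg_sub]
      _ = -(T ^ (n + 1) - 1) := by rw [h2]
      _ = 1 - T ^ (n + 1) := neg_sub _ _
  have hcommT : Commute (1 - T) ((u : Lp ℝ 2 (vμ L) →L[ℝ] Lp ℝ 2 (vμ L))) := by
    rw [hval]
    exact (Commute.one_right (1 - T)).sub_right
      (((Commute.one_left T).sub_left (Commute.refl T)).pow_right (n + 1))
  have hcomm : Commute (1 - T) (((u⁻¹ : _ˣ) : Lp ℝ 2 (vμ L) →L[ℝ] Lp ℝ 2 (vμ L))) :=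
    hcommT.units_inv_right
  set U : (Lp ℝ 2 (vμ L) →L[ℝ] Lp ℝ 2 (vμ L))ˣ :=
    { val := 1 - T
      inv := S * ((u⁻¹ : _ˣ) : Lp ℝ 2 (vμ L) →L[ℝ] Lp ℝ 2 (vμ L))
      val_inv := by
        rw [← mul_assoc, hS1, ← hval]
        exact u.mul_inv
      inv_val := by
        calc S * ((u⁻¹ : _ˣ) : _) * (1 - T)
            = S * (((u⁻¹ : _ˣ) : _) * (1 - T)) := mul_assoc _ _ _
          _ = S * ((1 - T) * ((u⁻¹ : _ˣ) : _)) := by rw [hcomm.eq]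
          _ = S * (1 - T) * ((u⁻¹ : _ˣ) : _) := (mul_assoc _ _ _).symm
          _ = (1 - T ^ (n + 1)) * ((u⁻¹ : _ˣ) : _) := by rw [hS2]
          _ = 1 := by rw [← hval]; exact u.mul_inv } with hU_def
  refine ⟨ContinuousLinearEquiv.ofUnit U, fun f => ?_⟩
  have hPi : (ContinuousLinearEquiv.ofUnit U) f = f - T f := by
    show (1 - T) f = f - T f
    rw [ContinuousLinearMap.sub_apply, ContinuousLinearMap.one_apply]
  rw [hPi]
  filter_upwards [Lp.coeFn_sub f (T f), Vop_coeFn L hL K hKc M hM f,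
    ae_restrict_mem measurableSet_Ioo] with x h1 h2 h3
  rw [h1, Pi.sub_apply, h2, Vint_eq_interval L hL k K hkK (⇑f) h3]
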